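/- For every ρ* > 0 there exists a constant C > 0 depending only on ρ* such that for every integer N ≥ 2 with ε = 1/N and every (i', j') ∈ F_N: ‖ B_D[i', j'] − B_C[i', j'] ‖ ≤ C·ε²·((i')² + (j')²)², where ‖·‖ is the spectral (operator) norm on 2×2 real matrices. -/

import Mathlib

noncomputable section
open Real Matrix Finset

/-- counterclockwise rotation by π/2 -/
def perp (l : Fin 2 → ℝ) : Fin 2 → ℝ := ![-(l 1), l 0]

/-- triangular-lattice direction l₁ = (1/2, −√3/2) -/
def tl1 : Fin 2 → ℝ := ![1/2, -(Real.sqrt 3)/2]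
/-- triangular-lattice direction l₂ = (1, 0) -/
def tl2 : Fin 2 → ℝ := ![1, 0]
/-- triangular-lattice direction l₃ = (1/2, √3/2) -/
def tl3 : Fin 2 → ℝ := ![1/2, Real.sqrt 3 / 2]

/-- ε = 1/N -/
def eps (N : ℕ) : ℝ := 1 / N

/-- (i, j) belongs to the frequency set F_N, i.e. −N/2 ≤ i < N/2 and −N/2 ≤ j < N/2 -/
def inFreq (N : ℕ) (i j : ℤ) : Prop :=
  -(N:ℤ) ≤ 2*i ∧ 2*i < (N:ℤ) ∧ -(N:ℤ) ≤ 2*j ∧ 2*j < (N:ℤ)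

/-- the block ρ l lᵀ + 12 l⊥ l⊥ᵀ -/
def blk (ρ : ℝ) (l : Fin 2 → ℝ) : Matrix (Fin 2) (Fin 2) ℝ :=
  ρ • vecMulVec l l + (12:ℝ) • vecMulVec (perp l) (perp l)

/-- the discrete matrix A_D[i', j'] -/
def AD (ρ : ℝ) (N : ℕ) (i j : ℤ) : Matrix (Fin 2) (Fin 2) ℝ :=
  (4 * Real.sin (π * i * eps N)^2 / (eps N)^2) • blk ρ tl1
  + (4 * Real.sin (π * (i+j) * eps N)^2 / (eps N)^2) • blk ρ tl2
  + (4 * Real.sin (π * j * eps N)^2 / (eps N)^2) • blk ρ tl3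

/-- the discrete vector d_D[i', j'] -/
def dD (N : ℕ) (i j : ℤ) : Fin 2 → ℝ :=
  (12:ℝ) • ((Real.sin (2*π*i*eps N) / eps N) • perp tl1
    + (Real.sin (2*π*(i+j)*eps N) / eps N) • perp tl2
    + (Real.sin (2*π*j*eps N) / eps N) • perp tl3)

/-- the discrete scalar c_D[i', j'] -/
def cD (N : ℕ) (i j : ℤ) : ℝ :=
  36 - 8 * (Real.sin (π * i * eps N)^2 + Real.sin (π * (i+j) * eps N)^2
    + Real.sin (π * j * eps N)^2)

/-- the discrete Schur complement B_D[i', j'] = A_D − (1/c_D) d_D d_Dᵀ -/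
def BD (ρ : ℝ) (N : ℕ) (i j : ℤ) : Matrix (Fin 2) (Fin 2) ℝ :=
  AD ρ N i j - (1 / cD N i j) • vecMulVec (dD N i j) (dD N i j)

/-- the continuum matrix A_C[i', j'] -/
def AC (ρ : ℝ) (i j : ℤ) : Matrix (Fin 2) (Fin 2) ℝ :=
  (4 * π^2 * (i:ℝ)^2) • blk ρ tl1 + (4 * π^2 * ((i:ℝ)+(j:ℝ))^2) • blk ρ tl2
  + (4 * π^2 * (j:ℝ)^2) • blk ρ tl3

/-- the continuum vector d_C[i', j'] -/
def dC (i j : ℤ) : Fin 2 → ℝ :=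
  (24 * π) • ((i:ℝ) • perp tl1 + ((i:ℝ)+(j:ℝ)) • perp tl2 + (j:ℝ) • perp tl3)

/-- the continuum Schur complement B_C[i', j'] = A_C − (1/36) d_C d_Cᵀ -/
def BC (ρ : ℝ) (i j : ℤ) : Matrix (Fin 2) (Fin 2) ℝ :=
  AC ρ i j - (1/36 : ℝ) • vecMulVec (dC i j) (dC i j)

/-- spectral (operator) norm of a 2×2 real matrix, i.e. the operator norm of
the induced map on Euclidean space -/
def specNorm (M : Matrix (Fin 2) (Fin 2) ℝ) : ℝ :=
  ‖Matrix.toEuclideanCLM (𝕜 := ℝ) M‖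

lemma sin_sub_cube (x : ℝ) : |Real.sin x - x| ≤ |x|^3 / 6 := by
  have key : ∀ y : ℝ, 0 ≤ y → y - Real.sin y ≤ y^3/6 := by
    intro y hy
    have hd : ∀ t : ℝ, HasDerivAt (fun t : ℝ => t^3/6 - t + Real.sin t)
        (t^2/2 - 1 + Real.cos t) t := by
      intro t
      have h1 := ((hasDerivAt_pow 3 t).div_const 6).sub (hasDerivAt_id t)
      have h2 := h1.add (Real.hasDerivAt_sin t)
      refine HasDerivAt.congr_deriv h2 ?_
      simp; ring
    have hmono : Monotone (fun t : ℝ => t^3/6 - t + Real.sin t) := by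
      apply monotone_of_deriv_nonneg
      · intro t; exact (hd t).differentiableAt
      · intro t
        rw [(hd t).deriv]
        nlinarith [Real.one_sub_sq_div_two_le_cos (x := t)]
    have h0 := hmono hy
    simp at h0
    nlinarith
  rcases le_or_gt 0 x with hx | hx
  · rw [abs_of_nonneg hx, abs_of_nonpos (by linarith [Real.sin_le hx])]
    nlinarith [key x hx]
  · have h := key (-x) (by linarith)
    rw [abs_of_neg hx, abs_of_nonneg (by simpa using Real.le_sin hx.le)]
    simp [Real.sin_neg] at h ⊢
    nlinarith

lemma abs_mul_le' {x y X Y : ℝ} (hx : |x| ≤ X) (hy : |y| ≤ Y) : |x*y| ≤ X*Y := by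
  rw [abs_mul]
  exact mul_le_mul hx hy (abs_nonneg _) ((abs_nonneg _).trans hx)

lemma q_bound (m e : ℝ) (he : 0 < e) :
    |4 * Real.sin (π*m*e)^2 / e^2 - 4*π^2*m^2| ≤ 4*π^4/3 * e^2 * m^4 := by
  have h1 := sin_sub_cube (π*m*e)
  have h2 : |Real.sin (π*m*e)| ≤ |π*m*e| := Real.abs_sin_le_abs
  have key : |Real.sin (π*m*e)^2 - (π*m*e)^2| ≤ |π*m*e|^4/3 := by
    have hfac : Real.sin (π*m*e)^2 - (π*m*e)^2
        = (Real.sin (π*m*e) - π*m*e) * (Real.sin (π*m*e) + π*m*e) := by ring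
    rw [hfac, abs_mul]
    have hsum : |Real.sin (π*m*e) + π*m*e| ≤ 2*|π*m*e| := by
      have := abs_add_le (Real.sin (π*m*e)) (π*m*e)
      linarith
    calc |Real.sin (π*m*e) - π*m*e| * |Real.sin (π*m*e) + π*m*e|
        ≤ (|π*m*e|^3/6) * (2*|π*m*e|) :=
          mul_le_mul h1 hsum (abs_nonneg _) (by positivity)
      _ = |π*m*e|^4/3 := by ring
  have hx4 : |π*m*e|^4 = π^4*m^4*e^4 := by
    rw [← abs_pow, abs_of_nonneg (by positivity : (0:ℝ) ≤ (π*m*e)^4)]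
    ring
  have hrw : 4 * Real.sin (π*m*e)^2 / e^2 - 4*π^2*m^2
      = (Real.sin (π*m*e)^2 - (π*m*e)^2) * (4/e^2) := by
    field_simp
  rw [hrw, abs_mul, abs_of_pos (show (0:ℝ) < 4/e^2 by positivity)]
  calc |Real.sin (π*m*e)^2 - (π*m*e)^2| * (4/e^2)
      ≤ (|π*m*e|^4/3) * (4/e^2) := mul_le_mul_of_nonneg_right key (by positivity)
    _ = 4*π^4/3 * e^2 * m^4 := by rw [hx4]; field_simp

lemma u_bound (m e : ℝ) (he : 0 < e) :
    |Real.sin (2*π*m*e)/e - 2*π*m| ≤ 4*π^3/3 * e^2 * |m|^3 := by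
  have h1 := sin_sub_cube (2*π*m*e)
  have habs : |2*π*m*e| = 2*π*e*|m| := by
    rw [abs_mul, abs_mul, abs_mul]
    rw [abs_of_pos Real.pi_pos, abs_of_pos he]
    norm_num
    ring
  have hrw : Real.sin (2*π*m*e)/e - 2*π*m = (Real.sin (2*π*m*e) - 2*π*m*e) * (1/e) := by
    field_simp
  rw [hrw, abs_mul, abs_of_pos (show (0:ℝ) < 1/e by positivity)]
  rw [habs] at h1
  calc |Real.sin (2*π*m*e) - 2*π*m*e| * (1/e)
      ≤ ((2*π*e*|m|)^3/6) * (1/e) := mul_le_mul_of_nonneg_right h1 (by positivity)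
    _ = 4*π^3/3 * e^2 * |m|^3 := by field_simp; ring

lemma u_abs (m e : ℝ) (he : 0 < e) : |Real.sin (2*π*m*e)/e| ≤ 2*π*|m| := by
  rw [abs_div, abs_of_pos he, div_le_iff₀ he]
  have h2 : |Real.sin (2*π*m*e)| ≤ |2*π*m*e| := Real.abs_sin_le_abs
  have habs : |2*π*m*e| = 2*π*e*|m| := by
    rw [abs_mul, abs_mul, abs_mul]
    rw [abs_of_pos Real.pi_pos, abs_of_pos he]
    norm_num
    ring
  rw [habs] at h2
  linarith

lemma abs_triple (x1 x2 x3 p1 p2 p3 X1 X2 X3 : ℝ)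
    (h1 : |x1| ≤ X1) (h2 : |x2| ≤ X2) (h3 : |x3| ≤ X3)
    (hp1 : |p1| ≤ 1) (hp2 : |p2| ≤ 1) (hp3 : |p3| ≤ 1) :
    |x1*p1 + x2*p2 + x3*p3| ≤ X1 + X2 + X3 := by
  have e1 : |x1*p1| ≤ X1 := by simpa using abs_mul_le' h1 hp1
  have e2 : |x2*p2| ≤ X2 := by simpa using abs_mul_le' h2 hp2
  have e3 : |x3*p3| ≤ X3 := by simpa using abs_mul_le' h3 hp3
  have := abs_add_le (x1*p1) (x2*p2)
  have := abs_add_le (x1*p1 + x2*p2) (x3*p3)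
  linarith

lemma assemble (T1 T2 T3 T4 T5 E b1 b2 b3 b4 b5 : ℝ)
    (hE : E = T1+T2+T3+T4+T5) (h1 : |T1| ≤ b1) (h2 : |T2| ≤ b2) (h3 : |T3| ≤ b3)
    (h4 : |T4| ≤ b4) (h5 : |T5| ≤ b5) : |E| ≤ b1+b2+b3+b4+b5 := by
  subst hE
  have := abs_add_le (T1+T2+T3+T4) T5
  have := abs_add_le (T1+T2+T3) T4
  have := abs_add_le (T1+T2) T3
  have := abs_add_le T1 T2
  linarith

lemma sqrt3_le_two : Real.sqrt 3 ≤ 2 := by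
  nlinarith [Real.sq_sqrt (show (0:ℝ) ≤ 3 by norm_num), Real.sqrt_nonneg 3]

lemma tl1_bound : ∀ c : Fin 2, |tl1 c| ≤ 1 := by
  intro c
  fin_cases c <;> norm_num [tl1, abs_le] <;> constructor <;>
    nlinarith [Real.sqrt_nonneg 3, sqrt3_le_two]

lemma tl2_bound : ∀ c : Fin 2, |tl2 c| ≤ 1 := by
  intro c; fin_cases c <;> simp [tl2]

lemma tl3_bound : ∀ c : Fin 2, |tl3 c| ≤ 1 := by
  intro c
  fin_cases c <;> norm_num [tl3, abs_le] <;> constructor <;>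
    nlinarith [Real.sqrt_nonneg 3, sqrt3_le_two]

lemma perp_bound (l : Fin 2 → ℝ) (hl : ∀ c, |l c| ≤ 1) : ∀ c : Fin 2, |perp l c| ≤ 1 := by
  intro c
  fin_cases c
  · simpa [perp] using hl 1
  · simpa [perp] using hl 0

lemma blk_bound (ρ : ℝ) (hρ : 0 ≤ ρ) (l : Fin 2 → ℝ) (hl : ∀ c, |l c| ≤ 1) (a b : Fin 2) :
    |blk ρ l a b| ≤ ρ + 12 := by
  have hp := perp_bound l hl
  simp only [blk, Matrix.add_apply, Matrix.smul_apply, vecMulVec_apply, smul_eq_mul]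
  have e1 : |ρ * (l a * l b)| ≤ ρ * 1 := abs_mul_le' (le_of_eq (abs_of_nonneg hρ))
    (abs_mul_le' (hl a) (hl b) |>.trans (by norm_num))
  have e2 : |12 * (perp l a * perp l b)| ≤ 12 * 1 := abs_mul_le' (by norm_num)
    (abs_mul_le' (hp a) (hp b) |>.trans (by norm_num))
  have := abs_add_le (ρ * (l a * l b)) (12 * (perp l a * perp l b))
  linarith

lemma dC_apply (i j : ℤ) (c : Fin 2) :
    dC i j c = (24*π*(i:ℝ)) * perp tl1 c + (24*π*((i:ℝ)+(j:ℝ))) * perp tl2 c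
      + (24*π*(j:ℝ)) * perp tl3 c := by
  simp only [dC, Pi.smul_apply, Pi.add_apply, smul_eq_mul]
  ring

lemma dD_apply (N : ℕ) (i j : ℤ) (c : Fin 2) :
    dD N i j c = (12*(Real.sin (2*π*(i:ℝ)*eps N)/eps N)) * perp tl1 c
      + (12*(Real.sin (2*π*((i:ℝ)+(j:ℝ))*eps N)/eps N)) * perp tl2 c
      + (12*(Real.sin (2*π*(j:ℝ)*eps N)/eps N)) * perp tl3 c := by
  simp only [dD, Pi.smul_apply, Pi.add_apply, smul_eq_mul]
  push_cast
  ring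

lemma entry_eq (ρ : ℝ) (N : ℕ) (i j : ℤ) (a b : Fin 2) :
    (BD ρ N i j - BC ρ i j) a b
    = (4 * Real.sin (π * (i:ℝ) * eps N)^2 / (eps N)^2 - 4*π^2*(i:ℝ)^2) * blk ρ tl1 a b
    + (4 * Real.sin (π * ((i:ℝ)+(j:ℝ)) * eps N)^2 / (eps N)^2 - 4*π^2*((i:ℝ)+(j:ℝ))^2) * blk ρ tl2 a b
    + (4 * Real.sin (π * (j:ℝ) * eps N)^2 / (eps N)^2 - 4*π^2*(j:ℝ)^2) * blk ρ tl3 a b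
    + (1/36 - 1/cD N i j) * (dC i j a * dC i j b)
    + (1/cD N i j) * (dC i j a * dC i j b - dD N i j a * dD N i j b) := by
  simp only [BD, BC, AD, AC, Matrix.sub_apply, Matrix.add_apply, Matrix.smul_apply,
    vecMulVec_apply, smul_eq_mul]
  ring

lemma cD_eq (N : ℕ) (i j : ℤ) :
    cD N i j = 36 - 8 * (Real.sin (π * (i:ℝ) * eps N)^2
      + Real.sin (π * ((i:ℝ)+(j:ℝ)) * eps N)^2 + Real.sin (π * (j:ℝ) * eps N)^2) := by
  simp only [cD]

lemma entry_bound (ρ : ℝ) (hρ : 0 < ρ) (N : ℕ) (hN : 1 ≤ N) (i j : ℤ) (a b : Fin 2) :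
    |(BD ρ N i j - BC ρ i j) a b|
      ≤ (4*ρ+912) * π^4 * (eps N)^2 * (|(i:ℝ)| + |(j:ℝ)|)^4 := by
  have he : 0 < eps N := by
    have h0 : (0:ℝ) < N := by exact_mod_cast Nat.pos_of_ne_zero (by omega)
    rw [eps]
    positivity
  set t : ℝ := |(i:ℝ)| + |(j:ℝ)| with hts
  clear_value t
  have ht0 : 0 ≤ t := by rw [hts]; positivity
  have hm1 : |(i:ℝ)| ≤ t := by rw [hts]; linarith [abs_nonneg ((j:ℝ))]
  have hm3 : |(j:ℝ)| ≤ t := by rw [hts]; linarith [abs_nonneg ((i:ℝ))]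
  have hm2 : |(i:ℝ)+(j:ℝ)| ≤ t := by rw [hts]; exact abs_add_le _ _
  have hp2 : ∀ m : ℝ, |m| ≤ t → m^2 ≤ t^2 := fun m hm => by
    nlinarith [abs_nonneg m, sq_abs m]
  have hp3 : ∀ m : ℝ, |m| ≤ t → |m|^3 ≤ t^3 := fun m hm =>
    pow_le_pow_left₀ (abs_nonneg m) hm 3
  have hp4 : ∀ m : ℝ, |m| ≤ t → m^4 ≤ t^4 := fun m hm => by
    nlinarith [abs_nonneg m, sq_abs m, hp2 m hm, sq_nonneg m]
  -- q bounds
  have hq : ∀ m : ℝ, |m| ≤ t →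
      |4 * Real.sin (π * m * eps N)^2 / (eps N)^2 - 4*π^2*m^2|
        ≤ 4*π^4/3 * (eps N)^2 * t^4 := by
    intro m hm
    refine (q_bound m (eps N) he).trans ?_
    have := hp4 m hm
    have hc : (0:ℝ) ≤ 4*π^4/3 * (eps N)^2 := by positivity
    calc 4*π^4/3 * (eps N)^2 * m^4 ≤ 4*π^4/3 * (eps N)^2 * t^4 :=
      mul_le_mul_of_nonneg_left this hc
      _ = _ := rfl
  -- blk bounds
  have hB1 : |blk ρ tl1 a b| ≤ ρ+12 := blk_bound ρ hρ.le tl1 tl1_bound a b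
  have hB2 : |blk ρ tl2 a b| ≤ ρ+12 := blk_bound ρ hρ.le tl2 tl2_bound a b
  have hB3 : |blk ρ tl3 a b| ≤ ρ+12 := blk_bound ρ hρ.le tl3 tl3_bound a b
  have hperp1 := perp_bound tl1 tl1_bound
  have hperp2 := perp_bound tl2 tl2_bound
  have hperp3 := perp_bound tl3 tl3_bound
  -- dC bound
  have hdC : ∀ c : Fin 2, |dC i j c| ≤ 72*π*t := by
    intro c
    rw [dC_apply]
    have key : ∀ m : ℝ, |m| ≤ t → |24*π*m| ≤ 24*π*t := by
      intro m hm
      rw [abs_mul, abs_of_pos (show (0:ℝ) < 24*π by positivity)]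
      exact mul_le_mul_of_nonneg_left hm (by positivity)
    refine (abs_triple _ _ _ _ _ _ _ _ _ (key _ hm1) (key _ hm2) (key _ hm3)
      (hperp1 c) (hperp2 c) (hperp3 c)).trans (le_of_eq (by ring))
  -- dD bound
  have hdD : ∀ c : Fin 2, |dD N i j c| ≤ 72*π*t := by
    intro c
    rw [dD_apply]
    have key : ∀ m : ℝ, |m| ≤ t →
        |12*(Real.sin (2*π*m*eps N)/eps N)| ≤ 24*π*t := by
      intro m hm
      have h1 : |(12:ℝ)| ≤ 12 := by norm_num
      refine (abs_mul_le' h1 (u_abs m (eps N) he)).trans ?_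
      have := mul_le_mul_of_nonneg_left hm (show (0:ℝ) ≤ 2*π by positivity)
      nlinarith [Real.pi_pos]
    refine (abs_triple _ _ _ _ _ _ _ _ _ (key _ hm1) (key _ hm2) (key _ hm3)
      (hperp1 c) (hperp2 c) (hperp3 c)).trans (le_of_eq (by ring))
  -- dD - dC bound
  have hdd : ∀ c : Fin 2, |dD N i j c - dC i j c| ≤ 48*π^3*(eps N)^2*t^3 := by
    intro c
    have hrepr : dD N i j c - dC i j c
        = (12*(Real.sin (2*π*(i:ℝ)*eps N)/eps N - 2*π*(i:ℝ))) * perp tl1 c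
        + (12*(Real.sin (2*π*((i:ℝ)+(j:ℝ))*eps N)/eps N - 2*π*((i:ℝ)+(j:ℝ)))) * perp tl2 c
        + (12*(Real.sin (2*π*(j:ℝ)*eps N)/eps N - 2*π*(j:ℝ))) * perp tl3 c := by
      rw [dD_apply, dC_apply]; ring
    rw [hrepr]
    have key : ∀ m : ℝ, |m| ≤ t →
        |12*(Real.sin (2*π*m*eps N)/eps N - 2*π*m)| ≤ 16*π^3*(eps N)^2*t^3 := by
      intro m hm
      have h1 : |(12:ℝ)| ≤ 12 := by norm_num
      refine (abs_mul_le' h1 (u_bound m (eps N) he)).trans ?_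
      have h2 := mul_le_mul_of_nonneg_left (hp3 m hm)
        (show (0:ℝ) ≤ 16*π^3*(eps N)^2 by positivity)
      calc 12 * (4*π^3/3 * (eps N)^2 * |m|^3) = 16*π^3*(eps N)^2 * |m|^3 := by ring
        _ ≤ 16*π^3*(eps N)^2 * t^3 := h2
        _ = _ := by ring
    refine (abs_triple _ _ _ _ _ _ _ _ _ (key _ hm1) (key _ hm2) (key _ hm3)
      (hperp1 c) (hperp2 c) (hperp3 c)).trans (le_of_eq (by ring))
  -- cD bounds
  have hcge : 12 ≤ cD N i j := by
    rw [cD_eq]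
    nlinarith [Real.sin_sq_le_one (π*(i:ℝ)*eps N),
      Real.sin_sq_le_one (π*((i:ℝ)+(j:ℝ))*eps N), Real.sin_sq_le_one (π*(j:ℝ)*eps N)]
  have hcle : cD N i j ≤ 36 := by
    rw [cD_eq]
    nlinarith [sq_nonneg (Real.sin (π*(i:ℝ)*eps N)),
      sq_nonneg (Real.sin (π*((i:ℝ)+(j:ℝ))*eps N)), sq_nonneg (Real.sin (π*(j:ℝ)*eps N))]
  have hcpos : 0 < cD N i j := by linarith
  have hsq : ∀ m : ℝ, |m| ≤ t → Real.sin (π*m*eps N)^2 ≤ π^2*(eps N)^2*t^2 := by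
    intro m hm
    refine (Real.sin_sq_le_sq).trans ?_
    have h2 := mul_le_mul_of_nonneg_left (hp2 m hm)
      (show (0:ℝ) ≤ π^2*(eps N)^2 by positivity)
    calc (π*m*eps N)^2 = π^2*(eps N)^2*m^2 := by ring
      _ ≤ π^2*(eps N)^2*t^2 := h2
  have h36c : 36 - cD N i j ≤ 24*π^2*(eps N)^2*t^2 := by
    rw [cD_eq]
    have := hsq _ hm1
    have := hsq _ hm2
    have := hsq _ hm3
    linarith
  have hinv : |1/36 - 1/cD N i j| ≤ π^2*(eps N)^2*t^2/18 := by
    have h1 : 1/cD N i j ≤ 1/12 := one_div_le_one_div_of_le (by norm_num) hcge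
    have h0 : 1/36 ≤ 1/cD N i j := one_div_le_one_div_of_le hcpos hcle
    rw [abs_sub_comm, abs_of_nonneg (by linarith)]
    have key : 1/cD N i j - 1/36 = (36 - cD N i j)/(36*cD N i j) := by
      rw [div_sub_div _ _ (ne_of_gt hcpos) (by norm_num : (36:ℝ) ≠ 0)]
      rw [show (36:ℝ) - cD N i j = 1 * 36 - cD N i j * 1 by ring, mul_comm (cD N i j) 36]
    rw [key]
    have h2 : (36 - cD N i j)/(36*cD N i j) ≤ (36 - cD N i j)/432 := by
      rw [div_le_div_iff₀ (by positivity) (by norm_num)]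
      nlinarith
    refine h2.trans ?_
    nlinarith [h36c]
  have hcinv : |1/cD N i j| ≤ 1/12 := by
    rw [abs_of_pos (by positivity)]
    exact one_div_le_one_div_of_le (by norm_num) hcge
  -- assemble
  have hT4 : |(1/36 - 1/cD N i j) * (dC i j a * dC i j b)|
      ≤ (π^2*(eps N)^2*t^2/18) * ((72*π*t)*(72*π*t)) :=
    abs_mul_le' hinv (abs_mul_le' (hdC a) (hdC b))
  have hT5 : |(1/cD N i j) * (dC i j a * dC i j b - dD N i j a * dD N i j b)|
      ≤ (1/12) * ((72*π*t)*(48*π^3*(eps N)^2*t^3) + (48*π^3*(eps N)^2*t^3)*(72*π*t)) := by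
    refine abs_mul_le' hcinv ?_
    have hsplit : dC i j a * dC i j b - dD N i j a * dD N i j b
        = dC i j a * (dC i j b - dD N i j b) + (dC i j a - dD N i j a) * dD N i j b := by
      ring
    rw [hsplit]
    refine (abs_add_le _ _).trans (add_le_add
      (abs_mul_le' (hdC a) (by rw [abs_sub_comm]; exact hdd b))
      (abs_mul_le' (by rw [abs_sub_comm]; exact hdd a) (hdD b)))
  refine (assemble _ _ _ _ _ _
    ((4*π^4/3*(eps N)^2*t^4)*(ρ+12)) ((4*π^4/3*(eps N)^2*t^4)*(ρ+12))
    ((4*π^4/3*(eps N)^2*t^4)*(ρ+12))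
    ((π^2*(eps N)^2*t^2/18) * ((72*π*t)*(72*π*t)))
    ((1/12) * ((72*π*t)*(48*π^3*(eps N)^2*t^3) + (48*π^3*(eps N)^2*t^3)*(72*π*t)))
    (entry_eq ρ N i j a b)
    (abs_mul_le' (hq _ hm1) hB1) (abs_mul_le' (hq _ hm2) hB2)
    (abs_mul_le' (hq _ hm3) hB3) hT4 hT5).trans (le_of_eq (by ring))

lemma specNorm_le_entries (M : Matrix (Fin 2) (Fin 2) ℝ) (K : ℝ)
    (hK : ∀ a b, |M a b| ≤ K) : specNorm M ≤ 4 * K := by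
  have hK0 : 0 ≤ K := le_trans (abs_nonneg _) (hK 0 0)
  apply ContinuousLinearMap.opNorm_le_bound _ (by positivity)
  intro x
  have hcoord : ∀ (v : EuclideanSpace ℝ (Fin 2)) (i : Fin 2), |v i| ≤ ‖v‖ := by
    intro v i
    rw [EuclideanSpace.norm_eq]
    rw [show |v i| = Real.sqrt (‖v i‖^2) by rw [Real.sqrt_sq_eq_abs]; simp]
    apply Real.sqrt_le_sqrt
    apply Finset.single_le_sum (f := fun k => ‖v k‖^2) (fun k _ => by positivity)
      (Finset.mem_univ i)
  set y := Matrix.toEuclideanCLM (𝕜 := ℝ) M x with hy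
  have happ : ∀ a : Fin 2, y a = M a 0 * x 0 + M a 1 * x 1 := by
    intro a
    have h1 : WithLp.equiv 2 (Fin 2 → ℝ) y = M.mulVec (WithLp.equiv 2 (Fin 2 → ℝ) x) :=
      Matrix.ofLp_toEuclideanCLM (𝕜 := ℝ) M x
    have h2 : y a = M.mulVec (fun k => x k) a := congrFun h1 a
    rw [h2]
    simp [Matrix.mulVec, dotProduct, Fin.sum_univ_two]
  have hb : ∀ a : Fin 2, |y a| ≤ 2 * K * ‖x‖ := by
    intro a
    rw [happ a]
    calc |M a 0 * x 0 + M a 1 * x 1| ≤ |M a 0| * |x 0| + |M a 1| * |x 1| := by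
          apply (abs_add_le _ _).trans; simp [abs_mul]
      _ ≤ K * ‖x‖ + K * ‖x‖ := by
          apply add_le_add <;> exact mul_le_mul (hK _ _) (hcoord x _) (abs_nonneg _) hK0
      _ = 2 * K * ‖x‖ := by ring
  have hnorm : ‖y‖ ≤ |y 0| + |y 1| := by
    rw [EuclideanSpace.norm_eq]
    have h01 : ∑ i : Fin 2, ‖y i‖^2 ≤ (|y 0| + |y 1|)^2 := by
      rw [Fin.sum_univ_two]
      have := abs_nonneg (y 0); have := abs_nonneg (y 1)
      simp only [Real.norm_eq_abs]
      nlinarith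
    calc Real.sqrt (∑ i : Fin 2, ‖y i‖^2) ≤ Real.sqrt ((|y 0| + |y 1|)^2) :=
          Real.sqrt_le_sqrt h01
      _ = |y 0| + |y 1| := by rw [Real.sqrt_sq (by positivity)]
  calc ‖y‖ ≤ |y 0| + |y 1| := hnorm
    _ ≤ 2*K*‖x‖ + 2*K*‖x‖ := add_le_add (hb 0) (hb 1)
    _ = 4 * K * ‖x‖ := by ring

/-- for every ρ* > 0 there is C > 0 depending only on ρ* such that
for every N ≥ 2 (ε = 1/N) and every (i', j') ∈ F_N,
‖B_D[i',j'] − B_C[i',j']‖ ≤ C ε² ((i')² + (j')²)² in spectral norm. -/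
theorem schur_difference (ρ : ℝ) (hρ : 0 < ρ) :
    ∃ C > 0, ∀ N : ℕ, 2 ≤ N → ∀ i j : ℤ, inFreq N i j →
      specNorm (BD ρ N i j - BC ρ i j)
        ≤ C * (eps N)^2 * ((i:ℝ)^2 + (j:ℝ)^2)^2 := by
  refine ⟨(64*ρ+14592)*π^4, by positivity, ?_⟩
  intro N hN i j _
  have hK : ∀ a b : Fin 2, |(BD ρ N i j - BC ρ i j) a b|
      ≤ (4*ρ+912) * π^4 * (eps N)^2 * (|(i:ℝ)| + |(j:ℝ)|)^4 :=
    fun a b => entry_bound ρ hρ N (by omega) i j a b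
  have h1 := specNorm_le_entries _ _ hK
  refine h1.trans ?_
  have ht2 : (|(i:ℝ)|+|(j:ℝ)|)^2 ≤ 2*((i:ℝ)^2+(j:ℝ)^2) := by
    nlinarith [sq_nonneg (|(i:ℝ)|-|(j:ℝ)|), sq_abs (i:ℝ), sq_abs (j:ℝ)]
  have ht4 : (|(i:ℝ)|+|(j:ℝ)|)^4 ≤ 4*((i:ℝ)^2+(j:ℝ)^2)^2 := by
    have h4 := mul_le_mul ht2 ht2 (sq_nonneg _)
      (by positivity : (0:ℝ) ≤ 2*((i:ℝ)^2+(j:ℝ)^2))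
    calc (|(i:ℝ)|+|(j:ℝ)|)^4 = (|(i:ℝ)|+|(j:ℝ)|)^2 * (|(i:ℝ)|+|(j:ℝ)|)^2 := by ring
      _ ≤ (2*((i:ℝ)^2+(j:ℝ)^2)) * (2*((i:ℝ)^2+(j:ℝ)^2)) := h4
      _ = 4*((i:ℝ)^2+(j:ℝ)^2)^2 := by ring
  have hco : (0:ℝ) ≤ (16*ρ+3648)*π^4*(eps N)^2 := by positivity
  calc 4*((4*ρ+912) * π^4 * (eps N)^2 * (|(i:ℝ)| + |(j:ℝ)|)^4)
      = ((16*ρ+3648)*π^4*(eps N)^2) * (|(i:ℝ)| + |(j:ℝ)|)^4 := by ring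
    _ ≤ ((16*ρ+3648)*π^4*(eps N)^2) * (4*((i:ℝ)^2+(j:ℝ)^2)^2) :=
        mul_le_mul_of_nonneg_left ht4 hco
    _ = (64*ρ+14592)*π^4 * (eps N)^2 * ((i:ℝ)^2+(j:ℝ)^2)^2 := by ring
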